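/- Let G be a finite simple graph that belongs to the family F, with bipartition classes A ∪ C and B and minimum degree k = delta(G) >= 2. Then the set [A,B] of all edges of G with one endvertex in A and the other in B is an edge open packing set of G, and consequently rho_e^o(G) * delta(G) = |E(G)|. -/

import Mathlib

open scoped Classical

variable {V : Type*}

/-- Two edges `e₁, e₂` have a common edge in `G` if some edge of `G`, different from both,
joins an endvertex of `e₁` to an endvertex of `e₂`. -/
def HasCommonEdge (G : SimpleGraph V) (e₁ e₂ : Sym2 V) : Prop :=
  ∃ x y : V, x ∈ e₁ ∧ y ∈ e₂ ∧ G.Adj x y ∧ s(x, y) ≠ e₁ ∧ s(x, y) ≠ e₂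

/-- `B` is an edge open packing set of `G`: a set of edges of `G` no two distinct members
of which have a common edge in `G`. -/
def IsEOP (G : SimpleGraph V) (B : Set (Sym2 V)) : Prop :=
  B ⊆ G.edgeSet ∧ ∀ e₁ ∈ B, ∀ e₂ ∈ B, e₁ ≠ e₂ → ¬ HasCommonEdge G e₁ e₂

/-- The edge open packing number of `G`: the maximum cardinality of an EOP set of `G`. -/
noncomputable def eopNum (G : SimpleGraph V) : ℕ :=
  sSup {n | ∃ B : Set (Sym2 V), IsEOP G B ∧ B.ncard = n}

/-- If `G` belongs to the family `ℱ`, with partition `A`, `B`, `C` of its vertex set,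
partite sets `A ∪ C` and `B`, minimum degree `k ≥ 2`, and every vertex of `B` having exactly
one neighbor in `A` and exactly `k - 1` neighbors in `C`, then the set `[A,B]` of edges of `G`
with one endvertex in `A` and the other in `B` is an EOP set of `G`, and
`ρₑᵒ(G) * δ(G) = |E(G)|`. -/
theorem stmt3 [Fintype V] (G : SimpleGraph V) (A B C : Set V) (k : ℕ)
    (hk : k = G.minDegree) (hk2 : 2 ≤ k)
    (hcover : A ∪ B ∪ C = Set.univ)
    (hAB : A ∩ B = ∅) (hAC : A ∩ C = ∅) (hBC : B ∩ C = ∅)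
    (hbip : ∀ a b : V, G.Adj a b → (a ∈ A ∪ C ∧ b ∈ B) ∨ (a ∈ B ∧ b ∈ A ∪ C))
    (hdeg : ∀ b ∈ B, (G.neighborSet b ∩ A).ncard = 1 ∧
      (G.neighborSet b ∩ C).ncard = k - 1) :
    IsEOP G {e : Sym2 V | e ∈ G.edgeSet ∧ ∃ a ∈ A, ∃ b ∈ B, e = s(a, b)} ∧
    eopNum G * G.minDegree = G.edgeSet.ncard := by
  classical
  -- basic disjointness facts
  have hAnB : ∀ v, v ∈ A → v ∉ B := fun v ha hb =>
    Set.eq_empty_iff_forall_notMem.mp hAB v ⟨ha, hb⟩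
  have hCnB : ∀ v, v ∈ C → v ∉ B := fun v hc hb =>
    Set.eq_empty_iff_forall_notMem.mp hBC v ⟨hb, hc⟩
  have hBnAC : ∀ v, v ∈ B → v ∉ A ∪ C := by
    rintro v hb (h | h)
    · exact hAnB v h hb
    · exact hCnB v h hb
  have hadjAC : ∀ u v, G.Adj u v → u ∈ B → v ∈ A ∪ C := by
    intro u v h hu
    rcases hbip u v h with ⟨h1, _⟩ | ⟨_, h2⟩
    · exact absurd h1 (hBnAC u hu)
    · exact h2
  -- unique neighbor in A
  have hAuniq : ∀ b ∈ B, ∀ a₁ a₂, a₁ ∈ A → a₂ ∈ A → G.Adj b a₁ → G.Adj b a₂ → a₁ = a₂ := by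
    intro b hb a₁ a₂ ha₁ ha₂ h1 h2
    obtain ⟨x, hx⟩ := Set.ncard_eq_one.mp (hdeg b hb).1
    have m1 : a₁ ∈ G.neighborSet b ∩ A := ⟨h1, ha₁⟩
    have m2 : a₂ ∈ G.neighborSet b ∩ A := ⟨h2, ha₂⟩
    rw [hx, Set.mem_singleton_iff] at m1 m2
    rw [m1, m2]
  -- canonical decomposition of edges
  have hedge : ∀ e : Sym2 V, ∃ x b, e ∈ G.edgeSet → (e = s(x, b) ∧ x ∈ A ∪ C ∧ b ∈ B) := by
    intro e
    induction e using Sym2.ind with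
    | _ u v =>
      by_cases he : G.Adj u v
      · rcases hbip u v he with ⟨h1, h2⟩ | ⟨h1, h2⟩
        · exact ⟨u, v, fun _ => ⟨rfl, h1, h2⟩⟩
        · exact ⟨v, u, fun _ => ⟨Sym2.eq_swap, h2, h1⟩⟩
      · exact ⟨u, u, fun h => absurd (G.mem_edgeSet.mp h) he⟩
  choose xOf bOf hxb using hedge
  have hxbE : ∀ e ∈ G.edgeSet, e = s(xOf e, bOf e) := fun e he => (hxb e he).1
  have hxAC : ∀ e ∈ G.edgeSet, xOf e ∈ A ∪ C := fun e he => (hxb e he).2.1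
  have hbB : ∀ e ∈ G.edgeSet, bOf e ∈ B := fun e he => (hxb e he).2.2
  have hxmem : ∀ e ∈ G.edgeSet, xOf e ∈ e := by
    intro e he
    exact Sym2.mem_iff_exists.mpr ⟨bOf e, hxbE e he⟩
  have hbmem : ∀ e ∈ G.edgeSet, bOf e ∈ e := by
    intro e he
    exact Sym2.mem_iff_exists.mpr ⟨xOf e, (hxbE e he).trans Sym2.eq_swap⟩
  have hadjxb : ∀ e ∈ G.edgeSet, G.Adj (xOf e) (bOf e) := by
    intro e he
    rw [← G.mem_edgeSet, ← hxbE e he]; exact he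
  have hbOf_eq : ∀ e ∈ G.edgeSet, ∀ b ∈ B, b ∈ e → b = bOf e := by
    intro e he b hb hbe
    rw [hxbE e he, Sym2.mem_iff] at hbe
    rcases hbe with rfl | rfl
    · exact absurd (hxAC e he) (hBnAC _ hb)
    · rfl
  -- degree of vertices of B is exactly k
  have hdegB : ∀ b ∈ B, G.degree b = k := by
    intro b hb
    have hsub : G.neighborSet b ⊆ A ∪ C := fun y hy => hadjAC b y hy hb
    have hsplit : G.neighborSet b = (G.neighborSet b ∩ A) ∪ (G.neighborSet b ∩ C) := by
      ext y
      simp only [Set.mem_union, Set.mem_inter_iff]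
      constructor
      · intro hy
        rcases hsub hy with h | h
        · exact Or.inl ⟨hy, h⟩
        · exact Or.inr ⟨hy, h⟩
      · rintro (⟨h, _⟩ | ⟨h, _⟩) <;> exact h
    have hdisj : Disjoint (G.neighborSet b ∩ A) (G.neighborSet b ∩ C) := by
      rw [Set.disjoint_iff_inter_eq_empty, Set.eq_empty_iff_forall_notMem]
      rintro y ⟨⟨_, hyA⟩, ⟨_, hyC⟩⟩
      exact Set.eq_empty_iff_forall_notMem.mp hAC y ⟨hyA, hyC⟩
    have hcount : (G.neighborSet b).ncard = 1 + (k - 1) := by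
      rw [hsplit, Set.ncard_union_eq hdisj (Set.toFinite _) (Set.toFinite _),
        (hdeg b hb).1, (hdeg b hb).2]
    have hdeg' : (G.neighborSet b).ncard = G.degree b := by
      rw [Set.ncard_eq_toFinset_card', Set.toFinset_card]
      exact G.card_neighborSet_eq_degree b
    omega
  have hdegk : ∀ v : V, k ≤ G.degree v := fun v => hk ▸ G.minDegree_le_degree v
  -- Part 1 : the set of A-B edges is an EOP set
  set D0 : Set (Sym2 V) := {e : Sym2 V | e ∈ G.edgeSet ∧ ∃ a ∈ A, ∃ b ∈ B, e = s(a, b)}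
    with hD0def
  have hEOP0 : IsEOP G D0 := by
    constructor
    · exact fun e he => he.1
    · rintro e₁ ⟨he₁, a₁, ha₁, b₁, hb₁, rfl⟩ e₂ ⟨he₂, a₂, ha₂, b₂, hb₂, rfl⟩ hne
      rintro ⟨x, y, hx, hy, hadj, hne1, hne2⟩
      have hadj1 : G.Adj a₁ b₁ := G.mem_edgeSet.mp he₁
      have hadj2 : G.Adj a₂ b₂ := G.mem_edgeSet.mp he₂
      rw [Sym2.mem_iff] at hx hy
      rcases hx with hx | hx <;> rcases hy with hy | hy <;>
        rw [hx, hy] at hadj hne1 hne2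
      · rcases hbip _ _ hadj with ⟨_, h⟩ | ⟨h, _⟩
        · exact hAnB _ ha₂ h
        · exact hAnB _ ha₁ h
      · have hxy : a₁ = a₂ := hAuniq b₂ hb₂ a₁ a₂ ha₁ ha₂ hadj.symm hadj2.symm
        exact hne2 (by rw [hxy])
      · have hxy : a₂ = a₁ := hAuniq b₁ hb₁ a₂ a₁ ha₂ ha₁ hadj hadj1.symm
        exact hne1 (by rw [hxy, Sym2.eq_swap])
      · rcases hbip _ _ hadj with ⟨h, _⟩ | ⟨_, h⟩
        · exact hBnAC _ hb₁ h
        · exact hBnAC _ hb₂ h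
  -- |D0| = |B|
  have hexA : ∀ b : V, ∃ a, b ∈ B → (a ∈ A ∧ G.Adj b a) := by
    intro b
    by_cases hb : b ∈ B
    · obtain ⟨a, ha⟩ := Set.ncard_eq_one.mp (hdeg b hb).1
      have hmem : a ∈ G.neighborSet b ∩ A := by rw [ha]; exact rfl
      exact ⟨a, fun _ => ⟨hmem.2, hmem.1⟩⟩
    · exact ⟨b, fun h => absurd h hb⟩
  choose aOf haOf using hexA
  have himg : D0 = (fun b => s(aOf b, b)) '' B := by
    ext e
    constructor
    · rintro ⟨he, a, ha, b, hb, rfl⟩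
      refine ⟨b, hb, ?_⟩
      have h1 : G.Adj a b := G.mem_edgeSet.mp he
      have h2 : aOf b = a := hAuniq b hb _ _ (haOf b hb).1 ha (haOf b hb).2 h1.symm
      simp only [h2]
    · rintro ⟨b, hb, rfl⟩
      exact ⟨G.mem_edgeSet.mpr (haOf b hb).2.symm, aOf b, (haOf b hb).1, b, hb, rfl⟩
  have hinj : Set.InjOn (fun b => s(aOf b, b)) B := by
    intro b hb b' hb' h
    simp only at h
    rcases Sym2.eq_iff.mp h with ⟨_, h2⟩ | ⟨h1, h2⟩
    · exact h2
    · exact absurd hb (hAnB b (by rw [h2]; exact (haOf b' hb').1))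
  have hD0B : D0.ncard = B.ncard := by
    rw [himg, Set.ncard_image_of_injOn hinj]
  -- edge count : |E| = |B| * k
  have hmB : G.edgeFinset.card = B.ncard * k := by
    have h1 : G.edgeFinset.card
        = ∑ b ∈ B.toFinset, (G.edgeFinset.filter (fun e => bOf e = b)).card := by
      apply Finset.card_eq_sum_card_fiberwise
      intro e he
      rw [Finset.mem_coe, Set.mem_toFinset]
      exact hbB e (SimpleGraph.mem_edgeFinset.mp he)
    have h2 : ∀ b ∈ B.toFinset, (G.edgeFinset.filter (fun e => bOf e = b)).card = k := by
      intro b hb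
      rw [Set.mem_toFinset] at hb
      have hfib : G.edgeFinset.filter (fun e => bOf e = b) = G.incidenceFinset b := by
        ext e
        simp only [Finset.mem_filter, SimpleGraph.mem_edgeFinset,
          SimpleGraph.mem_incidenceFinset, SimpleGraph.incidenceSet, Set.mem_setOf_eq,
          SimpleGraph.mem_edgeSet]
        constructor
        · rintro ⟨he, rfl⟩
          exact ⟨he, hbmem e he⟩
        · rintro ⟨he, hbe⟩
          exact ⟨he, (hbOf_eq e he b hb hbe).symm⟩
      rw [hfib, G.card_incidenceFinset_eq_degree, hdegB b hb]
    rw [h1, Finset.sum_congr rfl h2, Finset.sum_const, smul_eq_mul,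
      Set.ncard_eq_toFinset_card']
  -- upper bound : every EOP set D satisfies k * |D| ≤ |E|
  have hub : ∀ D : Set (Sym2 V), IsEOP G D → k * D.ncard ≤ G.edgeFinset.card := by
    intro D hD
    obtain ⟨hDsub, hcom⟩ := hD
    set sh : Sym2 V → Prop := fun e => ∃ e' ∈ D, e' ≠ e ∧ bOf e ∈ e' with hshdef
    set w : Sym2 V → V := fun e => if sh e then xOf e else bOf e with hwdef
    have hwpos : ∀ e, sh e → w e = xOf e := fun e h => if_pos h
    have hwneg : ∀ e, ¬ sh e → w e = bOf e := fun e h => if_neg h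
    -- the key lemma: mixed case
    have key : ∀ e₁ ∈ D, ∀ e₂ ∈ D, e₁ ≠ e₂ → ¬ sh e₁ → sh e₂ →
        ¬ G.Adj (bOf e₁) (xOf e₂) := by
      intro e₁ he₁ e₂ he₂ hne hsh1 hsh2 hadj
      have hE1 := hDsub he₁
      have hE2 := hDsub he₂
      have hbne : bOf e₁ ≠ bOf e₂ := by
        intro h
        exact hsh1 ⟨e₂, he₂, Ne.symm hne, by rw [h]; exact hbmem e₂ hE2⟩
      have hfne2 : s(bOf e₁, xOf e₂) ≠ e₂ := by
        intro h
        have h' : s(bOf e₁, xOf e₂) = s(xOf e₂, bOf e₂) := h.trans (hxbE e₂ hE2)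
        rcases Sym2.eq_iff.mp h' with ⟨h1, _⟩ | ⟨h1, _⟩
        · exact hBnAC _ (hbB e₁ hE1) (by rw [h1]; exact hxAC e₂ hE2)
        · exact hbne h1
      by_cases hff : s(bOf e₁, xOf e₂) = e₁
      · -- then xOf e₂ = xOf e₁
        have hxx : xOf e₂ = xOf e₁ := by
          have hff' : s(bOf e₁, xOf e₂) = s(xOf e₁, bOf e₁) := hff.trans (hxbE e₁ hE1)
          rcases Sym2.eq_iff.mp hff' with ⟨h1, _⟩ | ⟨_, h2⟩
          · exact absurd (by rw [h1]; exact hxAC e₁ hE1 : bOf e₁ ∈ A ∪ C)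
              (hBnAC _ (hbB e₁ hE1))
          · exact h2
        obtain ⟨e', he'D, he'ne, hbe'⟩ := hsh2
        have hE' := hDsub he'D
        have hb2b' : bOf e₂ = bOf e' := hbOf_eq e' hE' (bOf e₂) (hbB e₂ hE2) hbe'
        have hne1' : e' ≠ e₁ := by
          intro h
          subst h
          exact hbne (hb2b'.symm)
        apply hcom e₁ he₁ e' he'D (Ne.symm hne1')
        have heq2 : s(xOf e₁, bOf e₂) = e₂ := by rw [← hxx, ← hxbE e₂ hE2]
        refine ⟨xOf e₁, bOf e₂, hxmem e₁ hE1, hbe', ?_, ?_, ?_⟩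
        · have h := hadjxb e₂ hE2
          rwa [hxx] at h
        · rw [heq2]; exact Ne.symm hne
        · rw [heq2]; exact Ne.symm he'ne
      · exact hcom e₁ he₁ e₂ he₂ hne
          ⟨bOf e₁, xOf e₂, hbmem e₁ hE1, hxmem e₂ hE2, hadj, hff, hfne2⟩
    -- key2 : two shared edges cannot have the same x
    have key2 : ∀ e₁ ∈ D, ∀ e₂ ∈ D, e₁ ≠ e₂ → sh e₁ → xOf e₁ = xOf e₂ → False := by
      intro e₁ he₁ e₂ he₂ hne hsh1 hxx
      have hE1 := hDsub he₁
      have hE2 := hDsub he₂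
      have hbne : bOf e₁ ≠ bOf e₂ := by
        intro h
        apply hne
        rw [hxbE e₁ hE1, hxbE e₂ hE2, hxx, h]
      obtain ⟨e', he'D, he'ne, hbe'⟩ := hsh1
      have hE' := hDsub he'D
      have hb1b' : bOf e₁ = bOf e' := hbOf_eq e' hE' _ (hbB e₁ hE1) hbe'
      have hne2' : e' ≠ e₂ := by
        intro h
        subst h
        exact hbne hb1b'
      apply hcom e₂ he₂ e' he'D (Ne.symm hne2')
      have heq1 : s(xOf e₂, bOf e₁) = e₁ := by rw [← hxx, ← hxbE e₁ hE1]
      refine ⟨xOf e₂, bOf e₁, hxmem e₂ hE2, hbe', ?_, ?_, ?_⟩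
      · have h := hadjxb e₁ hE1
        rwa [hxx] at h
      · rw [heq1]; exact hne
      · rw [heq1]; exact Ne.symm he'ne
    -- main : chosen vertices are distinct and non-adjacent
    have hmain : ∀ e₁ ∈ D, ∀ e₂ ∈ D, e₁ ≠ e₂ →
        w e₁ ≠ w e₂ ∧ ¬ G.Adj (w e₁) (w e₂) := by
      intro e₁ he₁ e₂ he₂ hne
      have hE1 := hDsub he₁
      have hE2 := hDsub he₂
      by_cases h1 : sh e₁ <;> by_cases h2 : sh e₂
      · rw [hwpos e₁ h1, hwpos e₂ h2]
        constructor
        · intro h; exact key2 e₁ he₁ e₂ he₂ hne h1 h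
        · intro hadj
          rcases hbip _ _ hadj with ⟨_, hB'⟩ | ⟨hB', _⟩
          · exact hBnAC _ hB' (hxAC e₂ hE2)
          · exact hBnAC _ hB' (hxAC e₁ hE1)
      · rw [hwpos e₁ h1, hwneg e₂ h2]
        constructor
        · intro h
          exact hBnAC _ (hbB e₂ hE2) (by rw [← h]; exact hxAC e₁ hE1)
        · intro hadj
          exact key e₂ he₂ e₁ he₁ (Ne.symm hne) h2 h1 hadj.symm
      · rw [hwneg e₁ h1, hwpos e₂ h2]
        constructor
        · intro h
          exact hBnAC _ (hbB e₁ hE1) (by rw [h]; exact hxAC e₂ hE2)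
        · exact key e₁ he₁ e₂ he₂ hne h1 h2
      · rw [hwneg e₁ h1, hwneg e₂ h2]
        constructor
        · intro h
          exact h1 ⟨e₂, he₂, Ne.symm hne, by rw [h]; exact hbmem e₂ hE2⟩
        · intro hadj
          rcases hbip _ _ hadj with ⟨hx', _⟩ | ⟨_, hx'⟩
          · exact hBnAC _ (hbB e₁ hE1) hx'
          · exact hBnAC _ (hbB e₂ hE2) hx'
    have hfin : D.Finite := Set.toFinite D
    have hdisjF : ∀ e₁ ∈ hfin.toFinset, ∀ e₂ ∈ hfin.toFinset, e₁ ≠ e₂ →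
        Disjoint (G.incidenceFinset (w e₁)) (G.incidenceFinset (w e₂)) := by
      intro e₁ he₁ e₂ he₂ hne
      rw [Set.Finite.mem_toFinset] at he₁ he₂
      obtain ⟨hwne, hnadj⟩ := hmain e₁ he₁ e₂ he₂ hne
      rw [Finset.disjoint_left]
      intro f hf1 hf2
      rw [SimpleGraph.mem_incidenceFinset] at hf1 hf2
      have hfeq : f = s(w e₁, w e₂) := (Sym2.mem_and_mem_iff hwne).mp ⟨hf1.2, hf2.2⟩
      apply hnadj
      rw [← G.mem_edgeSet, ← hfeq]
      exact hf1.1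
    calc k * D.ncard = ∑ _e ∈ hfin.toFinset, k := by
          rw [Finset.sum_const, smul_eq_mul, Set.ncard_eq_toFinset_card D hfin, mul_comm]
      _ ≤ ∑ e ∈ hfin.toFinset, (G.incidenceFinset (w e)).card := by
          apply Finset.sum_le_sum
          intro e _
          rw [G.card_incidenceFinset_eq_degree]
          exact hdegk (w e)
      _ = (hfin.toFinset.biUnion (fun e => G.incidenceFinset (w e))).card :=
          (Finset.card_biUnion hdisjF).symm
      _ ≤ G.edgeFinset.card := by
          apply Finset.card_le_card
          intro f hf
          rw [Finset.mem_biUnion] at hf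
          obtain ⟨e, _, hf⟩ := hf
          rw [SimpleGraph.mem_incidenceFinset] at hf
          exact SimpleGraph.mem_edgeFinset.mpr hf.1
  -- relating ncard of edgeSet to edgeFinset
  have hEcard : G.edgeSet.ncard = G.edgeFinset.card := by
    rw [Set.ncard_eq_toFinset_card', Set.toFinset_card]
    convert G.edgeFinset_card.symm
  -- computing eopNum
  have hSmem : B.ncard ∈ {n | ∃ D : Set (Sym2 V), IsEOP G D ∧ D.ncard = n} :=
    ⟨D0, hEOP0, hD0B⟩
  have hbdd : ∀ n ∈ {n | ∃ D : Set (Sym2 V), IsEOP G D ∧ D.ncard = n}, n ≤ B.ncard := by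
    rintro n ⟨D, hD, rfl⟩
    have h2 : D.ncard * k ≤ B.ncard * k := by
      calc D.ncard * k = k * D.ncard := mul_comm _ _
        _ ≤ G.edgeFinset.card := hub D hD
        _ = B.ncard * k := hmB
    exact Nat.le_of_mul_le_mul_right h2 (by omega)
  have heop : eopNum G = B.ncard := by
    unfold eopNum
    apply le_antisymm
    · exact csSup_le ⟨B.ncard, hSmem⟩ hbdd
    · exact le_csSup ⟨B.ncard, hbdd⟩ hSmem
  refine ⟨hEOP0, ?_⟩
  rw [heop, ← hk, hEcard, hmB]
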